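/- Let n, m be positive integers and let σ_{n,m} be the block-swap permutation of {0,…,n+m−1}, defined by σ(i) = i + m for 0 ≤ i < n and σ(n+j) = j for 0 ≤ j < m. Then there exist permutations λ₁, …, λ_{n+m−1} of {0,…,n+m−1}, each of which is an involution moving every point by at most 1 (i.e., λ∘λ = id and |λ(i) − i| ≤ 1 for all i, so each λ_t is a product of pairwise disjoint adjacent transpositions), such that σ_{n,m} = λ_{n+m−1} ∘ ⋯ ∘ λ₂ ∘ λ₁. -/

import Mathlib

namespace BlockSwapAux

/-- Swap `(p, p+1)` is active at time `t`. -/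
def act (n m t p : ℕ) : Prop :=
  (p + n + t) % 2 = 0 ∧ n ≤ p + t ∧ t ≤ p + n ∧ p + 2 ≤ n + t ∧ p + t + 2 ≤ n + 2 * m

instance act.dec (n m t p : ℕ) : Decidable (act n m t p) := by
  unfold act; infer_instance

/-- The layer function at time `t`. -/
def lf (n m t q : ℕ) : ℕ :=
  if act n m t q then q + 1 else if 1 ≤ q ∧ act n m t (q - 1) then q - 1 else q

/-- Position at time `t` of the token starting at `i`. -/
def g (n m t i : ℕ) : ℕ :=
  if i < n then i + min (t - (n - 1 - i)) m else i - min (t - (i - n)) n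

lemma lf_lt {n m t q : ℕ} (hq : q < n + m) : lf n m t q < n + m := by
  unfold lf; split_ifs <;> (unfold act at *; omega)

lemma lf_invol (n m t q : ℕ) : lf n m t (lf n m t q) = q := by
  unfold lf; split_ifs <;> (unfold act at *; omega)

lemma lf_close (n m t q : ℕ) : lf n m t q ≤ q + 1 ∧ q ≤ lf n m t q + 1 := by
  unfold lf; split_ifs <;> (unfold act at *; omega)

lemma g_lt {n m : ℕ} (t : ℕ) {i : ℕ} (hi : i < n + m) : g n m t i < n + m := by
  unfold g; split_ifs <;> omega

lemma g_zero (n m i : ℕ) : g n m 0 i = i := by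
  unfold g; split_ifs <;> omega

lemma g_step (n m t : ℕ) {i : ℕ} (hi : i < n + m) :
    g n m (t + 1) i = lf n m (t + 1) (g n m t i) := by
  unfold g lf act; split_ifs <;> omega

lemma g_final {n m : ℕ} (hn : 1 ≤ n) (hm : 1 ≤ m) {i : ℕ} (hi : i < n + m) :
    g n m (n + m - 1) i = if i < n then i + m else i - n := by
  unfold g; split_ifs <;> omega

/-- The layer permutation at time `t`. -/
def tau (n m t : ℕ) : Equiv.Perm (Fin (n + m)) :=
  Function.Involutive.toPerm (fun q => ⟨lf n m t q.1, lf_lt q.2⟩)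
    (fun q => Fin.ext (lf_invol n m t q.1))

@[simp] lemma tau_apply (n m t : ℕ) (q : Fin (n + m)) :
    ((tau n m t q : Fin (n + m)) : ℕ) = lf n m t q.1 := rfl

lemma prod_apply (n m t : ℕ) (i : Fin (n + m)) :
    ((((List.range t).reverse.map (fun s => tau n m (s + 1))).prod i : Fin (n + m)) : ℕ)
      = g n m t i.1 := by
  induction t with
  | zero => simp [g_zero]
  | succ t ih =>
    rw [List.range_succ, List.reverse_append]
    simp only [List.reverse_singleton, List.singleton_append, List.map_cons, List.prod_cons,
      Equiv.Perm.mul_apply]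
    have : (((List.range t).reverse.map (fun s => tau n m (s + 1))).prod i)
        = ⟨g n m t i.1, g_lt t i.2⟩ := Fin.ext (ih)
    rw [this, tau_apply, ← g_step n m t i.2]

end BlockSwapAux

open BlockSwapAux in
/-- The block-swap permutation `σ_{n,m}` of `{0,…,n+m-1}` (mapping `i ↦ i + m` for
`i < n` and `n + j ↦ j` for `j < m`) is the composition of `n + m - 1` parallel swap
layers: involutions moving every point by at most 1. -/
theorem stmt_7 (n m : ℕ) (hn : 1 ≤ n) (hm : 1 ≤ m)
    (σ : Equiv.Perm (Fin (n + m)))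
    (hσ : ∀ i : Fin (n + m), ((σ i : ℕ)) =
      if (i : ℕ) < n then (i : ℕ) + m else (i : ℕ) - n) :
    ∃ L : List (Equiv.Perm (Fin (n + m))),
      L.length = n + m - 1 ∧
      (∀ τ ∈ L, τ * τ = 1 ∧ ∀ i : Fin (n + m), |((τ i : ℕ) : ℤ) - ((i : ℕ) : ℤ)| ≤ 1) ∧
      L.prod = σ := by
  refine ⟨(List.range (n + m - 1)).reverse.map (fun s => tau n m (s + 1)), by simp, ?_, ?_⟩
  · intro τ hτ
    simp only [List.mem_map, List.mem_reverse, List.mem_range] at hτ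
    obtain ⟨s, _, rfl⟩ := hτ
    constructor
    · ext q
      simp only [Equiv.Perm.mul_apply, Equiv.Perm.one_apply]
      exact lf_invol n m (s + 1) q.1
    · intro i
      rw [abs_le]
      have := lf_close n m (s + 1) i.1
      rw [tau_apply]
      omega
  · ext i
    rw [hσ i]
    have h1 := prod_apply n m (n + m - 1) i
    have h2 := g_final hn hm i.2
    exact h1.trans h2
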